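/- Let (P, ≼) be a finite poset and let A be the collection of all antichains of P, partially ordered by: α ≼ α' whenever for each element x of α there exists an element x' of α' with x ≼ x'. Then every chain in (A, ≼) has at most |P| + 1 elements. -/

import Mathlib

/-- The down-set of a set. -/
private def dset {P : Type*} [PartialOrder P] (α : Set P) : Set P :=
  {x | ∃ a ∈ α, x ≤ a}

private lemma dset_mono {P : Type*} [PartialOrder P] {α β : Set P}
    (h : ∀ x ∈ α, ∃ x' ∈ β, x ≤ x') : dset α ⊆ dset β := by
  rintro x ⟨a, ha, hxa⟩
  obtain ⟨b, hb, hab⟩ := h a ha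
  exact ⟨b, hb, hxa.trans hab⟩

private lemma antichain_eq_of_dset_eq {P : Type*} [PartialOrder P] {α β : Set P}
    (hα : IsAntichain (· ≤ ·) α) (hβ : IsAntichain (· ≤ ·) β)
    (h : dset α = dset β) : α = β := by
  have key : ∀ (γ δ : Set P), IsAntichain (· ≤ ·) γ → dset γ = dset δ → γ ⊆ δ := by
    intro γ δ hγ hd a ha
    have haγ : a ∈ dset δ := hd ▸ ⟨a, ha, le_refl a⟩
    obtain ⟨b, hb, hab⟩ := haγ
    have hbγ : b ∈ dset γ := by rw [hd]; exact ⟨b, hb, le_refl b⟩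
    obtain ⟨a', ha', hba'⟩ := hbγ
    have haa' : a = a' := by
      by_contra hne
      exact hγ ha ha' hne (hab.trans hba')
    have : a = b := le_antisymm hab (haa' ▸ hba')
    exact this ▸ hb
  exact Set.Subset.antisymm (key α β hα h) (key β α hβ h.symm)

/-- upper bound in Lemma 2 of the paper.
Let `(P, ≤)` be a finite poset and order the antichains of `P` by
`α ≼ α' ↔ ∀ x ∈ α, ∃ x' ∈ α', x ≤ x'`. Then every chain of antichains in this
order has at most `|P| + 1` elements. -/
theorem stmt11 {P : Type*} [PartialOrder P] [Fintype P]
    (C : Finset (Set P))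
    (hC : ∀ α ∈ C, IsAntichain (· ≤ ·) α)
    (hchain : IsChain (fun α α' : Set P => ∀ x ∈ α, ∃ x' ∈ α', x ≤ x') ↑C) :
    C.card ≤ Fintype.card P + 1 := by
  have hcard := Finset.card_le_card_of_injOn
    (f := fun α : Set P => (dset α).ncard) (t := Finset.range (Fintype.card P + 1))
    (fun α _ => by
      simp only [Finset.mem_coe, Finset.mem_range, Nat.lt_succ_iff]
      calc (dset α).ncard ≤ (Set.univ : Set P).ncard :=
            Set.ncard_le_ncard (Set.subset_univ _) (Set.toFinite _)
        _ = Fintype.card P := by rw [Set.ncard_univ, Nat.card_eq_fintype_card])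
    (fun α hα β hβ hcard => by
      by_contra hne
      have hdeq : dset α = dset β := by
        rcases hchain hα hβ hne with h | h
        · exact Set.eq_of_subset_of_ncard_le (dset_mono h) hcard.ge (Set.toFinite _)
        · exact (Set.eq_of_subset_of_ncard_le (dset_mono h) hcard.le (Set.toFinite _)).symm
      exact hne (antichain_eq_of_dset_eq (hC α hα) (hC β hβ) hdeq))
  simpa using hcard
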